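/- Under the group-pressure dynamics with underlying Hegselmann–Krause model (minimal confidence radius ε) and mean-value public opinion, if p_*(t) ≥ p₀ > 0 for all t, then exact consensus is reached in finite time, at latest by time 𝒯(ε, R₀, p₀) + 1, where 𝒯(ε,R₀,p₀) = 0 if ε ≥ R₀ and ⌈(log ε − log R₀)/log(1−p₀)⌉ otherwise, with R₀ the initial opinion diameter. -/

import Mathlib

open Finset

lemma conv_comb_diff_le {E : Type*} [NormedAddCommGroup E] [NormedSpace ℝ E]
    {n : ℕ} (x : Fin n → E) (a b : Fin n → ℝ) (δ D : ℝ)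
    (ha : ∀ k, δ ≤ a k) (hb : ∀ k, δ ≤ b k)
    (hsa : ∑ k, a k = 1) (hsb : ∑ k, b k = 1)
    (hD : ∀ k l, ‖x k - x l‖ ≤ D) (hD0 : 0 ≤ D) :
    ‖∑ k, a k • x k - ∑ k, b k • x k‖ ≤ (1 - n * δ) * D := by
  set s : ℝ := 1 - n * δ with hs
  have hsa' : ∑ k, (a k - δ) = s := by
    rw [Finset.sum_sub_distrib, hsa, Finset.sum_const, Finset.card_univ,
      Fintype.card_fin, nsmul_eq_mul, hs]
  have hsb' : ∑ k, (b k - δ) = s := by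
    rw [Finset.sum_sub_distrib, hsb, Finset.sum_const, Finset.card_univ,
      Fintype.card_fin, nsmul_eq_mul, hs]
  have hs0 : 0 ≤ s := hsa' ▸ Finset.sum_nonneg fun k _ => sub_nonneg.2 (ha k)
  have hdiff : ∑ k, a k • x k - ∑ k, b k • x k
      = ∑ k, (a k - δ) • x k - ∑ k, (b k - δ) • x k := by
    simp only [sub_smul, Finset.sum_sub_distrib]
    abel
  rcases eq_or_lt_of_le hs0 with hs0' | hs0'
  · have hza : ∀ k ∈ Finset.univ, a k - δ = 0 :=
      (Finset.sum_eq_zero_iff_of_nonneg (fun k _ => sub_nonneg.2 (ha k))).1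
        (hsa'.trans hs0'.symm)
    have hzb : ∀ k ∈ Finset.univ, b k - δ = 0 :=
      (Finset.sum_eq_zero_iff_of_nonneg (fun k _ => sub_nonneg.2 (hb k))).1
        (hsb'.trans hs0'.symm)
    have : ∑ k, a k • x k = ∑ k, b k • x k := by
      refine Finset.sum_congr rfl fun k _ => ?_
      have h1 := hza k (mem_univ k); have h2 := hzb k (mem_univ k)
      have : a k = b k := by linarith
      rw [this]
    rw [this, sub_self, norm_zero]
    positivity
  · have h1 : s • ∑ k, (a k - δ) • x k
        = ∑ k, ∑ l, ((a k - δ) * (b l - δ)) • x k := by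
      rw [Finset.smul_sum]
      refine Finset.sum_congr rfl fun k _ => ?_
      rw [← Finset.sum_smul, ← Finset.mul_sum, hsb', smul_smul, mul_comm]
    have h2 : s • ∑ k, (b k - δ) • x k
        = ∑ k, ∑ l, ((a k - δ) * (b l - δ)) • x l := by
      rw [Finset.sum_comm, Finset.smul_sum]
      refine Finset.sum_congr rfl fun l _ => ?_
      rw [← Finset.sum_smul, ← Finset.sum_mul, hsa', smul_smul]
    have key : s • (∑ k, (a k - δ) • x k - ∑ k, (b k - δ) • x k)
        = ∑ k, ∑ l, ((a k - δ) * (b l - δ)) • (x k - x l) := by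
      simp_rw [smul_sub, Finset.sum_sub_distrib]
      rw [← h1, ← h2]
    have hbound : s * ‖∑ k, (a k - δ) • x k - ∑ k, (b k - δ) • x k‖ ≤ s * (s * D) := by
      have e1 : s * ‖∑ k, (a k - δ) • x k - ∑ k, (b k - δ) • x k‖
          = ‖s • (∑ k, (a k - δ) • x k - ∑ k, (b k - δ) • x k)‖ := by
        rw [norm_smul, Real.norm_of_nonneg hs0]
      rw [e1, key]
      calc ‖∑ k, ∑ l, ((a k - δ) * (b l - δ)) • (x k - x l)‖
          ≤ ∑ k, ∑ l, ‖((a k - δ) * (b l - δ)) • (x k - x l)‖ := by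
            refine (norm_sum_le _ _).trans (Finset.sum_le_sum fun k _ => norm_sum_le _ _)
        _ ≤ ∑ k, ∑ l, (a k - δ) * (b l - δ) * D := by
            refine Finset.sum_le_sum fun k _ => Finset.sum_le_sum fun l _ => ?_
            rw [norm_smul, Real.norm_of_nonneg
              (mul_nonneg (sub_nonneg.2 (ha k)) (sub_nonneg.2 (hb l)))]
            exact mul_le_mul_of_nonneg_left (hD k l)
              (mul_nonneg (sub_nonneg.2 (ha k)) (sub_nonneg.2 (hb l)))
        _ = s * (s * D) := by
            have : ∀ k, ∑ l, (a k - δ) * (b l - δ) * D = (a k - δ) * (s * D) := by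
              intro k
              simp_rw [mul_assoc, ← Finset.mul_sum, ← Finset.sum_mul, hsb']
            simp_rw [this, ← Finset.sum_mul, hsa']
    rw [hdiff]
    exact le_of_mul_le_mul_left hbound hs0'

/-- Finite-time consensus for the group-pressure dynamics with underlying
Hegselmann–Krause averaging, mean-value public opinion and uniformly positive
conformity levels: consensus is reached at latest by time `𝒯(ε, R₀, p₀) + 1`. -/
theorem HK_finite_time_consensus (d n : ℕ) [NeZero n]
    (ξ : ℕ → Fin n → EuclideanSpace ℝ (Fin d))
    (p : ℕ → Fin n → ℝ) (εr : Fin n → ℝ)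
    (hεr : ∀ i, 0 < εr i)
    (hp : ∀ t i, p t i ∈ Set.Icc (0 : ℝ) 1)
    (w : ℕ → Fin n → Fin n → ℝ)
    (hw : ∀ t i j, w t i j =
      if ‖ξ t j - ξ t i‖ ≤ εr i
        then ((Finset.univ.filter fun k => ‖ξ t k - ξ t i‖ ≤ εr i).card : ℝ)⁻¹
        else 0)
    (pub : ℕ → EuclideanSpace ℝ (Fin d))
    (hpub : ∀ t, pub t = (n : ℝ)⁻¹ • ∑ j, ξ t j)
    (hupd : ∀ t i, ξ (t + 1) i = p t i • pub t + (1 - p t i) • ∑ j, w t i j • ξ t j)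
    (p₀ : ℝ) (hp₀ : 0 < p₀) (hlow : ∀ t i, p₀ ≤ p t i)
    (ε R₀ : ℝ)
    (hε : ε = Finset.univ.inf' Finset.univ_nonempty εr)
    (hR₀ : R₀ = Finset.univ.sup' Finset.univ_nonempty
        (fun i => Finset.univ.sup' Finset.univ_nonempty fun j => ‖ξ 0 i - ξ 0 j‖)) :
    ∀ t : ℕ,
      (if R₀ ≤ ε then (0 : ℤ)
        else ⌈(Real.log ε - Real.log R₀) / Real.log (1 - p₀)⌉) + 1 ≤ (t : ℤ) →
      ∀ i j, ξ t i = ξ t j := by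
  have hn : 0 < n := Nat.pos_of_ne_zero (NeZero.ne n)
  have hnR : (0 : ℝ) < n := by exact_mod_cast hn
  have hnne : (n : ℝ) ≠ 0 := ne_of_gt hnR
  have i0 : Fin n := ⟨0, hn⟩
  have hεpos : 0 < ε := by
    rw [hε]
    exact (Finset.lt_inf'_iff _).2 fun i _ => hεr i
  have hεle : ∀ i, ε ≤ εr i := fun i => hε ▸ Finset.inf'_le _ (mem_univ i)
  have hinit : ∀ i j, ‖ξ 0 i - ξ 0 j‖ ≤ R₀ := by
    intro i j
    rw [hR₀]
    exact le_trans (Finset.le_sup' (fun j => ‖ξ 0 i - ξ 0 j‖) (mem_univ j))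
      (Finset.le_sup' (fun i => Finset.univ.sup' Finset.univ_nonempty
        fun j => ‖ξ 0 i - ξ 0 j‖) (mem_univ i))
  have hR₀0 : 0 ≤ R₀ := by simpa using hinit i0 i0
  have hp₀le1 : p₀ ≤ 1 := (hlow 0 i0).trans (hp 0 i0).2
  have hq0 : 0 ≤ 1 - p₀ := by linarith
  have hq1 : 1 - p₀ ≤ 1 := by linarith
  -- neighbour weights are nonnegative and sum to one
  have hwnn : ∀ t i k, 0 ≤ w t i k := by
    intro t i k
    rw [hw]
    split
    · positivity
    · exact le_refl 0
  have hwsum : ∀ t i, ∑ k, w t i k = 1 := by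
    intro t i
    have himem : i ∈ Finset.univ.filter fun k => ‖ξ t k - ξ t i‖ ≤ εr i := by
      simp [le_of_lt (hεr i)]
    have hcne : ((Finset.univ.filter fun k => ‖ξ t k - ξ t i‖ ≤ εr i).card : ℝ) ≠ 0 := by
      have : 0 < (Finset.univ.filter fun k => ‖ξ t k - ξ t i‖ ≤ εr i).card :=
        Finset.card_pos.2 ⟨i, himem⟩
      positivity
    simp_rw [hw t i]
    rw [← Finset.sum_filter, Finset.sum_const, nsmul_eq_mul, mul_inv_cancel₀ hcne]
  -- the update as a single convex combination
  have hupd' : ∀ t i, ξ (t + 1) i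
      = ∑ k, (p t i * (n : ℝ)⁻¹ + (1 - p t i) * w t i k) • ξ t k := by
    intro t i
    rw [hupd, hpub, Finset.smul_sum, Finset.smul_sum, Finset.smul_sum,
      ← Finset.sum_add_distrib]
    refine Finset.sum_congr rfl fun k _ => ?_
    rw [smul_smul, smul_smul, add_smul]
  have hvsum : ∀ t i, ∑ k, (p t i * (n : ℝ)⁻¹ + (1 - p t i) * w t i k) = 1 := by
    intro t i
    rw [Finset.sum_add_distrib, Finset.sum_const, ← Finset.mul_sum, hwsum,
      Finset.card_univ, Fintype.card_fin, nsmul_eq_mul]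
    field_simp
    ring
  have hvlow : ∀ t i k, p₀ * (n : ℝ)⁻¹ ≤ p t i * (n : ℝ)⁻¹ + (1 - p t i) * w t i k := by
    intro t i k
    have h1 : p₀ * (n : ℝ)⁻¹ ≤ p t i * (n : ℝ)⁻¹ :=
      mul_le_mul_of_nonneg_right (hlow t i) (by positivity)
    have h2 : 0 ≤ (1 - p t i) * w t i k :=
      mul_nonneg (by linarith [(hp t i).2]) (hwnn t i k)
    linarith
  -- diameter contraction
  have hdiam : ∀ t i j, ‖ξ t i - ξ t j‖ ≤ (1 - p₀) ^ t * R₀ := by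
    intro t
    induction t with
    | zero => simpa using hinit
    | succ t ih =>
      intro i j
      rw [hupd' t i, hupd' t j]
      have hcn : (1 : ℝ) - n * (p₀ * (n : ℝ)⁻¹) = 1 - p₀ := by
        field_simp
      have := conv_comb_diff_le (ξ t)
        (fun k => p t i * (n : ℝ)⁻¹ + (1 - p t i) * w t i k)
        (fun k => p t j * (n : ℝ)⁻¹ + (1 - p t j) * w t j k)
        (p₀ * (n : ℝ)⁻¹) ((1 - p₀) ^ t * R₀)
        (hvlow t i) (hvlow t j) (hvsum t i) (hvsum t j) ih (by positivity)
      rw [hcn] at this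
      calc ‖_ - _‖ ≤ (1 - p₀) * ((1 - p₀) ^ t * R₀) := this
        _ = (1 - p₀) ^ (t + 1) * R₀ := by ring
  -- one step after the diameter is below ε, consensus is reached
  have hstep : ∀ s, (∀ i j, ‖ξ s i - ξ s j‖ ≤ ε) → ∀ i j, ξ (s + 1) i = ξ (s + 1) j := by
    intro s hs
    have hall : ∀ i, ξ (s + 1) i = pub s := by
      intro i
      have hfilt : (Finset.univ.filter fun k => ‖ξ s k - ξ s i‖ ≤ εr i) = Finset.univ :=
        Finset.filter_true_of_mem fun k _ => (hs k i).trans (hεle i)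
      have hwi : ∀ k, w s i k = (n : ℝ)⁻¹ := by
        intro k
        rw [hw, if_pos ((hs k i).trans (hεle i)), hfilt, Finset.card_univ,
          Fintype.card_fin]
      rw [hupd]
      simp_rw [hwi]
      rw [← Finset.smul_sum, ← hpub s, ← add_smul]
      simp
    intro i j
    rw [hall i, hall j]
  -- final argument
  intro t ht
  set 𝒯 : ℤ := if R₀ ≤ ε then (0 : ℤ)
      else ⌈(Real.log ε - Real.log R₀) / Real.log (1 - p₀)⌉ with h𝒯
  have h𝒯0 : 0 ≤ 𝒯 := by
    rw [h𝒯]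
    split
    · exact le_refl 0
    · rename_i hRε
      push_neg at hRε
      refine Int.ceil_nonneg ?_
      have hnum : Real.log ε - Real.log R₀ ≤ 0 := by
        have := Real.log_le_log_iff hεpos (hεpos.trans hRε)
        have := Real.log_lt_log hεpos hRε
        linarith
      have hden : Real.log (1 - p₀) ≤ 0 :=
        Real.log_nonpos hq0 hq1
      exact div_nonneg_of_nonpos hnum hden
  obtain ⟨s, rfl⟩ : ∃ s, t = s + 1 := by
    cases t with
    | zero => exfalso; omega
    | succ s => exact ⟨s, rfl⟩
  have hts : 𝒯 ≤ (s : ℤ) := by push_cast at ht ⊢; omega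
  by_cases hp1 : 1 ≤ p₀
  · -- all conformity levels equal 1 : consensus to the public opinion in one step
    have hall : ∀ u i, ξ (u + 1) i = pub u := by
      intro u i
      have hpe : p u i = 1 := le_antisymm (hp u i).2 (hp1.trans (hlow u i))
      rw [hupd, hpe]
      simp
    intro i j
    rw [hall s i, hall s j]
  · push_neg at hp1
    have hqpos : 0 < 1 - p₀ := by linarith
    have hcontr : (1 - p₀) ^ s * R₀ ≤ ε := by
      rw [h𝒯] at hts
      by_cases hRε : R₀ ≤ ε
      · calc (1 - p₀) ^ s * R₀ ≤ 1 * R₀ :=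
            mul_le_mul_of_nonneg_right (pow_le_one₀ hq0 hq1) hR₀0
          _ = R₀ := one_mul R₀
          _ ≤ ε := hRε
      · rw [if_neg hRε] at hts
        push_neg at hRε
        have hR₀pos : 0 < R₀ := hεpos.trans hRε
        have hlogq : Real.log (1 - p₀) < 0 := Real.log_neg hqpos (by linarith)
        have hx : (Real.log ε - Real.log R₀) / Real.log (1 - p₀) ≤ (s : ℝ) := by
          calc (Real.log ε - Real.log R₀) / Real.log (1 - p₀)
              ≤ (⌈(Real.log ε - Real.log R₀) / Real.log (1 - p₀)⌉ : ℝ) := Int.le_ceil _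
            _ ≤ (s : ℝ) := by exact_mod_cast hts
        have hmul : (s : ℝ) * Real.log (1 - p₀) ≤ Real.log ε - Real.log R₀ := by
          have := mul_le_mul_of_nonpos_right hx (le_of_lt hlogq)
          rwa [div_mul_cancel₀ _ (ne_of_lt hlogq)] at this
        have hloggoal : Real.log ((1 - p₀) ^ s * R₀) ≤ Real.log ε := by
          rw [Real.log_mul (by positivity) (ne_of_gt hR₀pos), Real.log_pow]
          linarith
        exact (Real.log_le_log_iff (by positivity) hεpos).1 hloggoal
    have hsmall : ∀ i j, ‖ξ s i - ξ s j‖ ≤ ε :=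
      fun i j => (hdiam s i j).trans hcontr
    exact hstep s hsmall
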